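/- (Fractional Nash inequality.) Let d ≥ 1 and 0 < α < 2. There exists a constant C > 0, depending only on d and α, such that for every function f ∈ L¹(ℝ^d) ∩ L²(ℝ^d): ‖f‖₂^{2 + 2α/d} ≤ C · ( ∫_{ℝ^d} ∫_{ℝ^d} (f(x) − f(y))² |x−y|^{−d−α} dx dy ) · ‖f‖₁^{2α/d}. -/

import Mathlib

open MeasureTheory

open ENNReal Module Metric

noncomputable def nashH (ρ r t : ℝ) : ℝ≥0∞ := if r ≤ t then ENNReal.ofReal (t ^ ρ) else 0

lemma nashH_meas (ρ r : ℝ) : Measurable (nashH ρ r) := by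
  unfold nashH
  exact Measurable.ite measurableSet_Ici (by fun_prop) measurable_const

lemma nash_scale (d : ℕ) (ρ : ℝ) {r : ℝ} (hr : 0 < r) :
    ∫⁻ h : EuclideanSpace ℝ (Fin d), nashH ρ r ‖h‖ =
      ENNReal.ofReal (r ^ ((d : ℝ) + ρ)) * ∫⁻ h : EuclideanSpace ℝ (Fin d), nashH ρ 1 ‖h‖ := by
  have hrd : (0:ℝ) < r ^ d := pow_pos hr d
  have hmap := Measure.map_addHaar_smul (volume : Measure (EuclideanSpace ℝ (Fin d)))
    (ne_of_gt hr)
  rw [finrank_euclideanSpace_fin] at hmap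
  have hmeas : Measurable fun h : EuclideanSpace ℝ (Fin d) => nashH ρ r ‖h‖ :=
    (nashH_meas ρ r).comp measurable_norm
  have h1 : ∫⁻ h : EuclideanSpace ℝ (Fin d), nashH ρ r ‖h‖ ∂(Measure.map (r • ·) volume)
      = ∫⁻ u : EuclideanSpace ℝ (Fin d), nashH ρ r ‖r • u‖ :=
    lintegral_map hmeas (measurable_const_smul r)
  have hpt : ∀ u : EuclideanSpace ℝ (Fin d),
      nashH ρ r ‖r • u‖ = ENNReal.ofReal (r ^ ρ) * nashH ρ 1 ‖u‖ := by
    intro u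
    have hn : ‖r • u‖ = r * ‖u‖ := by rw [norm_smul, Real.norm_eq_abs, abs_of_pos hr]
    unfold nashH
    rw [hn]
    by_cases h : (1:ℝ) ≤ ‖u‖
    · rw [if_pos h, if_pos (by nlinarith), Real.mul_rpow hr.le (norm_nonneg u),
        ENNReal.ofReal_mul (Real.rpow_nonneg hr.le ρ)]
    · rw [if_neg h, if_neg (by nlinarith), mul_zero]
  rw [hmap, lintegral_smul_measure] at h1
  simp only [hpt] at h1
  have hm1 : Measurable fun h : EuclideanSpace ℝ (Fin d) => nashH ρ 1 ‖h‖ :=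
    (nashH_meas ρ 1).comp measurable_norm
  rw [lintegral_const_mul (ENNReal.ofReal (r ^ ρ)) hm1] at h1
  have habs : |((r:ℝ) ^ d)⁻¹| = (r ^ d)⁻¹ := abs_of_pos (by positivity)
  rw [habs] at h1
  have hcancel : ENNReal.ofReal (r ^ d) * ENNReal.ofReal ((r ^ d)⁻¹) = 1 := by
    rw [← ENNReal.ofReal_mul hrd.le, mul_inv_cancel₀ (ne_of_gt hrd)]
    simp
  have := congrArg (fun z => ENNReal.ofReal (r ^ d) * z) h1
  simp only [smul_eq_mul, ← mul_assoc, hcancel, one_mul] at this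
  rw [this, ← ENNReal.ofReal_mul hrd.le]
  congr 2
  rw [Real.rpow_add hr, Real.rpow_natCast]

lemma nash_K_lt_top (d : ℕ) {α : ℝ} (hα : 0 < α) :
    ∫⁻ h : EuclideanSpace ℝ (Fin d), nashH (-(d : ℝ) - α) 1 ‖h‖ < ∞ := by
  set s : ℝ := (d : ℝ) + α with hs
  have hbound : ∀ h : EuclideanSpace ℝ (Fin d),
      nashH (-(d : ℝ) - α) 1 ‖h‖ ≤ ENNReal.ofReal (2 ^ s) * ENNReal.ofReal ((1 + ‖h‖) ^ (-s)) := by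
    intro h
    unfold nashH
    by_cases hh : (1 : ℝ) ≤ ‖h‖
    · rw [if_pos hh]
      have h0 : (0:ℝ) < ‖h‖ := lt_of_lt_of_le one_pos hh
      have h1 : (0:ℝ) < 1 + ‖h‖ := by linarith
      have h2 : 1 + ‖h‖ ≤ 2 * ‖h‖ := by linarith
      have h3 : (2 * ‖h‖) ^ (-s) ≤ (1 + ‖h‖) ^ (-s) :=
        Real.rpow_le_rpow_of_nonpos h1 h2 (neg_nonpos.mpr (by positivity))
      have h4 : (2 * ‖h‖) ^ (-s) = 2 ^ (-s) * ‖h‖ ^ (-s) :=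
        Real.mul_rpow (by norm_num) h0.le
      have h5 : ‖h‖ ^ (-(d:ℝ) - α) = ‖h‖ ^ (-s) := by rw [hs]; ring_nf
      have h6 : ‖h‖ ^ (-s) ≤ 2 ^ s * (1 + ‖h‖) ^ (-s) := by
        have h7 : (0:ℝ) < 2 ^ s := Real.rpow_pos_of_pos two_pos s
        have h8 : 2 ^ s * (2 ^ (-s) * ‖h‖ ^ (-s)) = ‖h‖ ^ (-s) := by
          rw [← mul_assoc, ← Real.rpow_add two_pos]
          simp
        nlinarith [mul_le_mul_of_nonneg_left (h4 ▸ h3) h7.le]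
      rw [h5, ← ENNReal.ofReal_mul (by positivity)]
      exact ENNReal.ofReal_le_ofReal h6
    · rw [if_neg hh]
      exact zero_le'
  calc ∫⁻ h : EuclideanSpace ℝ (Fin d), nashH (-(d : ℝ) - α) 1 ‖h‖
      ≤ ∫⁻ h : EuclideanSpace ℝ (Fin d),
          ENNReal.ofReal (2 ^ s) * ENNReal.ofReal ((1 + ‖h‖) ^ (-s)) := lintegral_mono hbound
    _ = ENNReal.ofReal (2 ^ s) *
          ∫⁻ h : EuclideanSpace ℝ (Fin d), ENNReal.ofReal ((1 + ‖h‖) ^ (-s)) :=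
        lintegral_const_mul _ (by fun_prop)
    _ < ∞ := ENNReal.mul_lt_top ENNReal.ofReal_lt_top
        (finite_integral_one_add_norm (by rw [finrank_euclideanSpace_fin]; linarith))

lemma nash_K_pos (d : ℕ) (hd : 1 ≤ d) (ρ : ℝ) :
    0 < ∫⁻ h : EuclideanSpace ℝ (Fin d), nashH ρ 1 ‖h‖ := by
  have hm1 : Measurable fun h : EuclideanSpace ℝ (Fin d) => nashH ρ 1 ‖h‖ :=
    (nashH_meas ρ 1).comp measurable_norm
  rw [lintegral_pos_iff_support hm1]
  set x₀ : EuclideanSpace ℝ (Fin d) := EuclideanSpace.single ⟨0, hd⟩ (2:ℝ) with hx₀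
  have hnx₀ : ‖x₀‖ = 2 := by
    rw [hx₀, EuclideanSpace.norm_single]; norm_num
  have hsub : Metric.ball x₀ 1 ⊆ Function.support fun h => nashH ρ 1 ‖h‖ := by
    intro h hh
    have hdist : ‖x₀ - h‖ < 1 := by
      rw [← dist_eq_norm, dist_comm]; exact Metric.mem_ball.mp hh
    have h1 : (1:ℝ) ≤ ‖h‖ := by
      have := norm_sub_norm_le x₀ h
      rw [hnx₀] at this; linarith
    have h0 : (0:ℝ) < ‖h‖ := lt_of_lt_of_le one_pos h1
    simp only [Function.mem_support]
    unfold nashH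
    rw [if_pos h1]
    exact ne_of_gt (ENNReal.ofReal_pos.mpr (Real.rpow_pos_of_pos h0 ρ))
  exact lt_of_lt_of_le (measure_ball_pos volume x₀ one_pos) (measure_mono hsub)

lemma nash_master (d : ℕ) {ρ : ℝ} (hρ : ρ ≤ 0) (g : EuclideanSpace ℝ (Fin d) → ℝ)
    (hg : Measurable g) {r : ℝ} (hr : 0 < r) :
    2 * ((∫⁻ h : EuclideanSpace ℝ (Fin d), nashH ρ r ‖h‖) *
        ∫⁻ x, ENNReal.ofReal (g x ^ 2)) ≤
      (∫⁻ x, ∫⁻ y, ENNReal.ofReal ((g x - g y) ^ 2 * ‖x - y‖ ^ ρ)) +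
      ENNReal.ofReal (2 * r ^ ρ) * (∫⁻ x, ENNReal.ofReal |g x|) *
        (∫⁻ x, ENNReal.ofReal |g x|) := by
  set Kr : ℝ≥0∞ := ∫⁻ h : EuclideanSpace ℝ (Fin d), nashH ρ r ‖h‖ with hKr
  set L2 : ℝ≥0∞ := ∫⁻ x : EuclideanSpace ℝ (Fin d), ENNReal.ofReal (g x ^ 2) with hL2
  set L1 : ℝ≥0∞ := ∫⁻ x : EuclideanSpace ℝ (Fin d), ENNReal.ofReal |g x| with hL1
  -- measurability facts
  have hmK : ∀ x : EuclideanSpace ℝ (Fin d), Measurable fun y : EuclideanSpace ℝ (Fin d) => nashH ρ r ‖x - y‖ :=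
    fun x => (nashH_meas ρ r).comp ((measurable_const.sub measurable_id).norm)
  have hmKx : ∀ y : EuclideanSpace ℝ (Fin d), Measurable fun x : EuclideanSpace ℝ (Fin d) => nashH ρ r ‖x - y‖ :=
    fun y => (nashH_meas ρ r).comp ((measurable_id.sub measurable_const).norm)
  have hg2 : Measurable fun x : EuclideanSpace ℝ (Fin d) => ENNReal.ofReal (g x ^ 2) :=
    ENNReal.measurable_ofReal.comp (hg.pow_const 2)
  have hga : Measurable fun x : EuclideanSpace ℝ (Fin d) => ENNReal.ofReal |g x| :=
    ENNReal.measurable_ofReal.comp hg.abs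
  have hmKp : Measurable fun p : EuclideanSpace ℝ (Fin d) × EuclideanSpace ℝ (Fin d) => nashH ρ r ‖p.1 - p.2‖ :=
    (nashH_meas ρ r).comp ((measurable_fst.sub measurable_snd).norm)
  have hF1p : Measurable fun p : EuclideanSpace ℝ (Fin d) × EuclideanSpace ℝ (Fin d) =>
      ENNReal.ofReal ((g p.1 - g p.2) ^ 2 * ‖p.1 - p.2‖ ^ ρ) := by
    have h1 : Measurable fun p : EuclideanSpace ℝ (Fin d) × EuclideanSpace ℝ (Fin d) =>
        ‖p.1 - p.2‖ ^ ρ := by fun_prop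
    exact ENNReal.measurable_ofReal.comp
      ((((hg.comp measurable_fst).sub (hg.comp measurable_snd)).pow_const 2).mul h1)
  have hF2p : Measurable fun p : EuclideanSpace ℝ (Fin d) × EuclideanSpace ℝ (Fin d) =>
      ENNReal.ofReal (2 * (|g p.1| * |g p.2|) * r ^ ρ) := by
    apply ENNReal.measurable_ofReal.comp
    exact ((measurable_const.mul (((hg.comp measurable_fst).abs).mul
      ((hg.comp measurable_snd).abs)))).mul measurable_const
  -- translation invariance
  have htransl : ∀ x : EuclideanSpace ℝ (Fin d), ∫⁻ y : EuclideanSpace ℝ (Fin d), nashH ρ r ‖x - y‖ = Kr := by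
    intro x
    have h1 : ∀ y : EuclideanSpace ℝ (Fin d), ‖x - y‖ = ‖y + (-x)‖ := by
      intro y; rw [norm_sub_rev, sub_eq_add_neg]
    simp_rw [h1]
    exact lintegral_add_right_eq_self (fun h : EuclideanSpace ℝ (Fin d) => nashH ρ r ‖h‖) (-x)
  have htranslx : ∀ y : EuclideanSpace ℝ (Fin d), ∫⁻ x : EuclideanSpace ℝ (Fin d), nashH ρ r ‖x - y‖ = Kr := by
    intro y
    have h1 : ∀ x : EuclideanSpace ℝ (Fin d), ‖x - y‖ = ‖x + (-y)‖ := by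
      intro x; rw [sub_eq_add_neg]
    simp_rw [h1]
    exact lintegral_add_right_eq_self (fun h : EuclideanSpace ℝ (Fin d) => nashH ρ r ‖h‖) (-y)
  -- pointwise inequality
  have point : ∀ x y : EuclideanSpace ℝ (Fin d),
      (ENNReal.ofReal (g x ^ 2) + ENNReal.ofReal (g y ^ 2)) * nashH ρ r ‖x - y‖ ≤
        ENNReal.ofReal ((g x - g y) ^ 2 * ‖x - y‖ ^ ρ) +
        ENNReal.ofReal (2 * (|g x| * |g y|) * r ^ ρ) := by
    intro x y
    unfold nashH
    by_cases hc : r ≤ ‖x - y‖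
    · rw [if_pos hc]
      set w : ℝ := ‖x - y‖ ^ ρ with hw
      have hw0 : (0:ℝ) ≤ w := Real.rpow_nonneg (norm_nonneg _) ρ
      have hwr : w ≤ r ^ ρ := Real.rpow_le_rpow_of_nonpos hr hc hρ
      have hrρ : (0:ℝ) ≤ r ^ ρ := Real.rpow_nonneg hr.le ρ
      have habs : g x * g y * w ≤ |g x| * |g y| * r ^ ρ := by
        calc g x * g y * w ≤ |g x * g y * w| := le_abs_self _
          _ = |g x| * |g y| * w := by rw [abs_mul, abs_mul, abs_of_nonneg hw0]
          _ ≤ |g x| * |g y| * r ^ ρ := by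
              apply mul_le_mul_of_nonneg_left hwr (by positivity)
      have hreal : (g x ^ 2 + g y ^ 2) * w ≤
          (g x - g y) ^ 2 * w + 2 * (|g x| * |g y|) * r ^ ρ := by nlinarith
      rw [← ENNReal.ofReal_add (by positivity) (by positivity),
        ← ENNReal.ofReal_mul (by positivity)]
      calc ENNReal.ofReal ((g x ^ 2 + g y ^ 2) * w)
          ≤ ENNReal.ofReal ((g x - g y) ^ 2 * w + 2 * (|g x| * |g y|) * r ^ ρ) :=
            ENNReal.ofReal_le_ofReal hreal
        _ = ENNReal.ofReal ((g x - g y) ^ 2 * w) +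
            ENNReal.ofReal (2 * (|g x| * |g y|) * r ^ ρ) :=
            ENNReal.ofReal_add (by positivity) (by positivity)
    · rw [if_neg hc, mul_zero]
      exact zero_le'
  -- the left-hand side as a double integral
  have hlhs : ∫⁻ x : EuclideanSpace ℝ (Fin d), ∫⁻ y : EuclideanSpace ℝ (Fin d),
      (ENNReal.ofReal (g x ^ 2) + ENNReal.ofReal (g y ^ 2)) * nashH ρ r ‖x - y‖
      = 2 * (Kr * L2) := by
    have hinner : ∀ x : EuclideanSpace ℝ (Fin d), ∫⁻ y : EuclideanSpace ℝ (Fin d),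
        (ENNReal.ofReal (g x ^ 2) + ENNReal.ofReal (g y ^ 2)) * nashH ρ r ‖x - y‖
        = ENNReal.ofReal (g x ^ 2) * Kr +
          ∫⁻ y : EuclideanSpace ℝ (Fin d), ENNReal.ofReal (g y ^ 2) * nashH ρ r ‖x - y‖ := by
      intro x
      simp_rw [add_mul]
      rw [lintegral_add_left ((hmK x).const_mul _),
        lintegral_const_mul _ (hmK x), htransl x]
    simp_rw [hinner]
    rw [lintegral_add_left ((hg2.mul_const Kr))]
    have hswap : ∫⁻ x : EuclideanSpace ℝ (Fin d), ∫⁻ y : EuclideanSpace ℝ (Fin d), ENNReal.ofReal (g y ^ 2) * nashH ρ r ‖x - y‖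
        = L2 * Kr := by
      rw [lintegral_lintegral_swap (((hg2.comp measurable_snd).mul hmKp).aemeasurable)]
      have : ∀ y : EuclideanSpace ℝ (Fin d), ∫⁻ x : EuclideanSpace ℝ (Fin d), ENNReal.ofReal (g y ^ 2) * nashH ρ r ‖x - y‖
          = ENNReal.ofReal (g y ^ 2) * Kr := by
        intro y
        rw [lintegral_const_mul _ (hmKx y), htranslx y]
      simp_rw [this]
      rw [lintegral_mul_const _ hg2]
    rw [hswap, lintegral_mul_const _ hg2]
    ring
  -- the cross term
  have hcross : ∫⁻ x : EuclideanSpace ℝ (Fin d), ∫⁻ y : EuclideanSpace ℝ (Fin d), ENNReal.ofReal (2 * (|g x| * |g y|) * r ^ ρ)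
      = ENNReal.ofReal (2 * r ^ ρ) * L1 * L1 := by
    have hrρ : (0:ℝ) ≤ r ^ ρ := Real.rpow_nonneg hr.le ρ
    have hpt : ∀ x y : EuclideanSpace ℝ (Fin d), ENNReal.ofReal (2 * (|g x| * |g y|) * r ^ ρ)
        = ENNReal.ofReal (2 * r ^ ρ) * ENNReal.ofReal |g x| * ENNReal.ofReal |g y| := by
      intro x y
      rw [show 2 * (|g x| * |g y|) * r ^ ρ = 2 * r ^ ρ * |g x| * |g y| by ring,
        ENNReal.ofReal_mul (by positivity), ENNReal.ofReal_mul (by positivity)]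
    simp_rw [hpt]
    have hinner : ∀ x : EuclideanSpace ℝ (Fin d), ∫⁻ y : EuclideanSpace ℝ (Fin d),
        ENNReal.ofReal (2 * r ^ ρ) * ENNReal.ofReal |g x| * ENNReal.ofReal |g y|
        = ENNReal.ofReal (2 * r ^ ρ) * L1 * ENNReal.ofReal |g x| := by
      intro x
      rw [lintegral_const_mul _ hga]
      ring
    simp_rw [hinner]
    rw [lintegral_const_mul _ hga]
  -- assemble
  calc 2 * (Kr * L2)
      = ∫⁻ x : EuclideanSpace ℝ (Fin d), ∫⁻ y : EuclideanSpace ℝ (Fin d),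
          (ENNReal.ofReal (g x ^ 2) + ENNReal.ofReal (g y ^ 2)) * nashH ρ r ‖x - y‖ :=
        hlhs.symm
    _ ≤ ∫⁻ x : EuclideanSpace ℝ (Fin d), ∫⁻ y : EuclideanSpace ℝ (Fin d),
          (ENNReal.ofReal ((g x - g y) ^ 2 * ‖x - y‖ ^ ρ) +
            ENNReal.ofReal (2 * (|g x| * |g y|) * r ^ ρ)) :=
        lintegral_mono fun x => lintegral_mono fun y => point x y
    _ = (∫⁻ x : EuclideanSpace ℝ (Fin d), ∫⁻ y : EuclideanSpace ℝ (Fin d), ENNReal.ofReal ((g x - g y) ^ 2 * ‖x - y‖ ^ ρ)) +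
          ∫⁻ x : EuclideanSpace ℝ (Fin d), ∫⁻ y : EuclideanSpace ℝ (Fin d), ENNReal.ofReal (2 * (|g x| * |g y|) * r ^ ρ) := by
        have : ∀ x : EuclideanSpace ℝ (Fin d), ∫⁻ y : EuclideanSpace ℝ (Fin d),
            (ENNReal.ofReal ((g x - g y) ^ 2 * ‖x - y‖ ^ ρ) +
              ENNReal.ofReal (2 * (|g x| * |g y|) * r ^ ρ))
            = (∫⁻ y : EuclideanSpace ℝ (Fin d), ENNReal.ofReal ((g x - g y) ^ 2 * ‖x - y‖ ^ ρ)) +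
              ∫⁻ y : EuclideanSpace ℝ (Fin d), ENNReal.ofReal (2 * (|g x| * |g y|) * r ^ ρ) := by
          intro x
          exact lintegral_add_left (hF1p.comp (measurable_prodMk_left)) _
        simp_rw [this]
        exact lintegral_add_left (hF1p.lintegral_prod_right') _
    _ = (∫⁻ x : EuclideanSpace ℝ (Fin d), ∫⁻ y : EuclideanSpace ℝ (Fin d), ENNReal.ofReal ((g x - g y) ^ 2 * ‖x - y‖ ^ ρ)) +
          ENNReal.ofReal (2 * r ^ ρ) * L1 * L1 := by rw [hcross]

/-- Fractional Nash inequality: for `0 < α < 2` there is `C > 0` depending only on `d`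
and `α` such that for every `f ∈ L¹(ℝ^d) ∩ L²(ℝ^d)`,
`‖f‖₂^{2+2α/d} ≤ C (∬ (f(x)-f(y))² |x-y|^{-d-α} dx dy) ‖f‖₁^{2α/d}`. -/
theorem stmt_14 (d : ℕ) (hd : 1 ≤ d) (α : ℝ) (hα0 : 0 < α) (hα2 : α < 2) :
    ∃ C : ℝ, 0 < C ∧ ∀ f : EuclideanSpace ℝ (Fin d) → ℝ,
      MemLp f 1 volume → MemLp f 2 volume →
      eLpNorm f 2 volume ^ (2 + 2 * α / (d : ℝ)) ≤
        ENNReal.ofReal C *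
          (∫⁻ x, ∫⁻ y, ENNReal.ofReal ((f x - f y) ^ 2 * ‖x - y‖ ^ (-(d : ℝ) - α))) *
          eLpNorm f 1 volume ^ (2 * α / (d : ℝ)) := by

  have hd0 : (0:ℝ) < d := by exact_mod_cast Nat.pos_of_ne_zero (by omega)
  set ρ : ℝ := -(d : ℝ) - α with hρdef
  have hρ0 : ρ ≤ 0 := by rw [hρdef]; linarith
  set K₁ : ℝ≥0∞ := ∫⁻ h : EuclideanSpace ℝ (Fin d), nashH ρ 1 ‖h‖ with hK1def
  have hK1pos : 0 < K₁ := nash_K_pos d hd ρ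
  have hK1top : K₁ < ∞ := nash_K_lt_top d hα0
  set κ : ℝ := K₁.toReal with hκdef
  have hκpos : 0 < κ := ENNReal.toReal_pos (ne_of_gt hK1pos) hK1top.ne
  set s : ℝ := α / d with hsdef
  have hspos : 0 < s := by rw [hsdef]; positivity
  have h2s : (0:ℝ) < 2 ^ s := Real.rpow_pos_of_pos two_pos s
  have hκs : (0:ℝ) < κ ^ (1 + s) := Real.rpow_pos_of_pos hκpos _
  refine ⟨2 ^ s / κ ^ (1 + s), by positivity, ?_⟩
  intro f hf1 hf2
  set C : ℝ := 2 ^ s / κ ^ (1 + s) with hCdef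
  -- measurable representative
  set g : EuclideanSpace ℝ (Fin d) → ℝ := hf1.1.mk f with hgdef
  have hgm : Measurable g := hf1.1.stronglyMeasurable_mk.measurable
  have hfg : f =ᵐ[volume] g := hf1.1.ae_eq_mk
  have he2 : eLpNorm f 2 volume = eLpNorm g 2 volume := eLpNorm_congr_ae hfg
  have he1 : eLpNorm f 1 volume = eLpNorm g 1 volume := eLpNorm_congr_ae hfg
  have hI : (∫⁻ x, ∫⁻ y, ENNReal.ofReal ((f x - f y) ^ 2 * ‖x - y‖ ^ ρ))
      = ∫⁻ x, ∫⁻ y, ENNReal.ofReal ((g x - g y) ^ 2 * ‖x - y‖ ^ ρ) := by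
    apply lintegral_congr_ae
    filter_upwards [hfg] with x hx
    apply lintegral_congr_ae
    filter_upwards [hfg] with y hy
    rw [hx, hy]
  set I : ℝ≥0∞ := ∫⁻ x, ∫⁻ y, ENNReal.ofReal ((g x - g y) ^ 2 * ‖x - y‖ ^ ρ) with hIdef
  set L2 : ℝ≥0∞ := ∫⁻ x, ENNReal.ofReal (g x ^ 2) with hL2def
  set L1 : ℝ≥0∞ := ∫⁻ x, ENNReal.ofReal |g x| with hL1def
  have hga : Measurable fun x : EuclideanSpace ℝ (Fin d) => ENNReal.ofReal |g x| :=
    ENNReal.measurable_ofReal.comp hgm.abs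
  have hsq : ∀ t : ℝ, ENNReal.ofReal |t| ^ (2:ℝ) = ENNReal.ofReal (t ^ 2) := by
    intro t
    rw [ENNReal.ofReal_rpow_of_nonneg (abs_nonneg t) (by norm_num)]
    congr 1
    rw [show (2:ℝ) = ((2:ℕ):ℝ) by norm_num, Real.rpow_natCast, sq_abs]
  have hL1eq : eLpNorm g 1 volume = L1 := by
    rw [eLpNorm_one_eq_lintegral_enorm]
    exact lintegral_congr fun x => Real.enorm_eq_ofReal_abs (g x)
  have hnn2 : ∀ x, (‖g x‖₊ : ℝ≥0∞) ^ (2:ℝ) = ENNReal.ofReal (g x ^ 2) := fun x => by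
    rw [← enorm_eq_nnnorm, Real.enorm_eq_ofReal_abs]; exact hsq (g x)
  have hL2eq : eLpNorm g 2 volume = L2 ^ (1/2 : ℝ) := by
    calc eLpNorm g 2 volume
        = (∫⁻ x, (‖g x‖₊ : ℝ≥0∞) ^ (2:ℝ)) ^ (1/2 : ℝ) := by
          rw [eLpNorm_eq_lintegral_rpow_enorm_toReal two_ne_zero ENNReal.ofNat_ne_top]
          simp only [← enorm_eq_nnnorm]
          norm_num
      _ = L2 ^ (1/2 : ℝ) := by rw [lintegral_congr hnn2]
  have hL2top : L2 < ∞ := by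
    have h1 : L2 = eLpNorm g 2 volume ^ (2:ℝ) := by
      rw [hL2eq, ← ENNReal.rpow_mul]
      norm_num
    rw [h1]
    exact ENNReal.rpow_lt_top_of_nonneg (by norm_num) (he2 ▸ hf2.2).ne
  have hL1top : L1 < ∞ := by rw [← hL1eq]; exact he1 ▸ hf1.2
  by_cases hL2z : L2 = 0
  · have h0 : eLpNorm f 2 volume = 0 := by
      rw [he2, hL2eq, hL2z, ENNReal.zero_rpow_of_pos (by norm_num)]
    rw [h0, ENNReal.zero_rpow_of_pos (by positivity)]
    exact zero_le'
  · have hL1z : L1 ≠ 0 := by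
      intro h0
      apply hL2z
      have hgz : (fun x => ENNReal.ofReal |g x|) =ᵐ[volume] 0 :=
        (lintegral_eq_zero_iff hga).mp h0
      have hg2m : Measurable fun x : EuclideanSpace ℝ (Fin d) =>
          ENNReal.ofReal (g x ^ 2) := ENNReal.measurable_ofReal.comp (hgm.pow_const 2)
      rw [hL2def, lintegral_eq_zero_iff hg2m]
      filter_upwards [hgz] with x hx
      simp only [Pi.zero_apply, ENNReal.ofReal_eq_zero] at hx ⊢
      have hx0 : g x = 0 := abs_eq_zero.mp (le_antisymm hx (abs_nonneg _))
      simp [hx0]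
    set a : ℝ := L2.toReal with hadef
    set b : ℝ := L1.toReal with hbdef
    have ha : 0 < a := ENNReal.toReal_pos hL2z hL2top.ne
    have hb : 0 < b := ENNReal.toReal_pos hL1z hL1top.ne
    have hL2a : L2 = ENNReal.ofReal a := (ENNReal.ofReal_toReal hL2top.ne).symm
    have hL1b : L1 = ENNReal.ofReal b := (ENNReal.ofReal_toReal hL1top.ne).symm
    have hK1κ : K₁ = ENNReal.ofReal κ := (ENNReal.ofReal_toReal hK1top.ne).symm
    set t : ℝ := 2 * b ^ 2 / (κ * a) with htdef
    have htpos : 0 < t := by positivity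
    set r : ℝ := t ^ (1 / (d:ℝ)) with hrdef
    have hrpos : 0 < r := Real.rpow_pos_of_pos htpos _
    have hrd : r ^ ((d:ℝ)) = t := by
      rw [hrdef, ← Real.rpow_mul htpos.le, one_div, inv_mul_cancel₀ (ne_of_gt hd0),
        Real.rpow_one]
    have hrneg : r ^ (-(d:ℝ)) = t⁻¹ := by
      rw [Real.rpow_neg hrpos.le, hrd]
    have hrα : r ^ (-α) = t ^ (-s) := by
      rw [hrdef, ← Real.rpow_mul htpos.le]
      congr 1
      rw [hsdef]
      field_simp
    set D : ℝ := κ * r ^ (-α) * a with hDdef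
    have hD0 : 0 ≤ D := by
      have := Real.rpow_nonneg hrpos.le (-α)
      rw [hDdef]; positivity
    -- master inequality
    have hmaster := nash_master d hρ0 g hgm hrpos
    have hscale := nash_scale d ρ hrpos
    have hdρ : (d:ℝ) + ρ = -α := by rw [hρdef]; ring
    rw [hdρ] at hscale
    have hKrL2 : (∫⁻ h : EuclideanSpace ℝ (Fin d), nashH ρ r ‖h‖) * L2
        = ENNReal.ofReal D := by
      rw [hscale, ← hK1def, hK1κ, hL2a, ← ENNReal.ofReal_mul (Real.rpow_nonneg hrpos.le _),
        ← ENNReal.ofReal_mul (by positivity)]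
      congr 1
      rw [hDdef]; ring
    have hcrossD : ENNReal.ofReal (2 * r ^ ρ) * L1 * L1 = ENNReal.ofReal D := by
      have hrρnn : (0:ℝ) ≤ r ^ ρ := Real.rpow_nonneg hrpos.le ρ
      rw [hL1b, ← ENNReal.ofReal_mul (by positivity), ← ENNReal.ofReal_mul (by positivity)]
      congr 1
      have hρsplit : r ^ ρ = t⁻¹ * r ^ (-α) := by
        rw [← hrneg, ← Real.rpow_add hrpos]
        congr 1 <;> (rw [hρdef]; ring)
      rw [hρsplit, htdef, hDdef]
      field_simp
    have hD_le : ENNReal.ofReal D ≤ I := by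
      have h2 : ENNReal.ofReal D + ENNReal.ofReal D ≤ I + ENNReal.ofReal D := by
        calc ENNReal.ofReal D + ENNReal.ofReal D
            = 2 * ((∫⁻ h : EuclideanSpace ℝ (Fin d), nashH ρ r ‖h‖) * L2) := by
              rw [hKrL2, two_mul]
          _ ≤ I + ENNReal.ofReal (2 * r ^ ρ) * L1 * L1 := hmaster
          _ = I + ENNReal.ofReal D := by rw [hcrossD]
      exact (ENNReal.add_le_add_iff_right ENNReal.ofReal_ne_top).mp h2
    -- final computation
    rw [he2, he1, hI, hL2eq, hL1eq, hL2a, hL1b]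
    have hexp1 : (ENNReal.ofReal a ^ (1/2 : ℝ)) ^ (2 + 2 * α / (d:ℝ))
        = ENNReal.ofReal (a ^ (1 + s)) := by
      rw [← ENNReal.rpow_mul, ENNReal.ofReal_rpow_of_pos ha]
      congr 2
      rw [hsdef]; field_simp
    have hexp2 : ENNReal.ofReal b ^ (2 * α / (d:ℝ)) = ENNReal.ofReal (b ^ (2 * s)) := by
      rw [ENNReal.ofReal_rpow_of_pos hb]
      congr 1
      rw [hsdef]; field_simp
    rw [hexp1, hexp2]
    -- the key real identity
    have hkey : a ^ (1 + s) = C * D * b ^ (2 * s) := by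
      have hts : t ^ (-s) = (κ * a) ^ s / (2 * b ^ 2) ^ s := by
        rw [Real.rpow_neg htpos.le, htdef, Real.div_rpow (by positivity) (by positivity)]
        rw [inv_div]
      have hb2s : (2 * b ^ 2) ^ s = 2 ^ s * b ^ (2 * s) := by
        rw [Real.mul_rpow (by norm_num) (by positivity)]
        congr 1
        rw [← Real.rpow_natCast b 2, ← Real.rpow_mul hb.le]
        norm_num [mul_comm]
      have hκas : (κ * a) ^ s = κ ^ s * a ^ s := Real.mul_rpow hκpos.le ha.le
      have ha1s : a ^ (1 + s) = a * a ^ s := by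
        rw [Real.rpow_add ha, Real.rpow_one]
      have hκ1s : κ ^ (1 + s) = κ * κ ^ s := by
        rw [Real.rpow_add hκpos, Real.rpow_one]
      have has : (0:ℝ) < a ^ s := Real.rpow_pos_of_pos ha s
      have hκss : (0:ℝ) < κ ^ s := Real.rpow_pos_of_pos hκpos s
      have hbs : (0:ℝ) < b ^ (2*s) := Real.rpow_pos_of_pos hb _
      rw [hCdef, hDdef, hrα, hts, hκas, hb2s, ha1s, hκ1s]
      field_simp
    calc ENNReal.ofReal (a ^ (1 + s))
        = ENNReal.ofReal C * ENNReal.ofReal D * ENNReal.ofReal (b ^ (2*s)) := by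
          rw [← ENNReal.ofReal_mul (by positivity), ← ENNReal.ofReal_mul (by positivity),
            ← hkey]
      _ ≤ ENNReal.ofReal C * I * ENNReal.ofReal (b ^ (2*s)) := by
          gcongr
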